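/- Let V be a ℂ-vector space and σ : V ⊗ V → V ⊗ V a linear map satisfying the braid relation (σ⊗id)(id⊗σ)(σ⊗id) = (id⊗σ)(σ⊗id)(id⊗σ) on V^{⊗3}. For n ≥ 0 define the antisymmetrizer A_n = Σ_{π ∈ S_n} (−1)^π σ_π on V^{⊗n}, where σ_π is the operator obtained from a reduced word for π by replacing each adjacent transposition s_i with the σ-twist acting in slots i, i+1 (well-defined by the braid relation). For k, l ≥ 0 define the shuffle sum A_{k,l} = Σ_{π ∈ S_{k,l}} (−1)^π σ_{π^{-1}}, where S_{k,l} ⊆ S_{k+l} is the set of (k,l)-shuffles. Then A_{k+l} = (A_k ⊗ A_l) ∘ A_{k,l} on V^{⊗(k+l)}. -/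

import Mathlib

open TensorProduct

noncomputable section

/-- The adjacent transposition `s_i` in `S_n` (the identity if out of range). -/
def aswap (n i : ℕ) : Equiv.Perm (Fin n) :=
  if h : i + 1 < n then Equiv.swap ⟨i, Nat.lt_of_succ_lt h⟩ ⟨i + 1, h⟩ else 1

/-- The number of inversions of a permutation (its Coxeter length). -/
def invCount {n : ℕ} (π : Equiv.Perm (Fin n)) : ℕ :=
  (Finset.univ.filter (fun p : Fin n × Fin n => p.1 < p.2 ∧ π p.2 < π p.1)).card

/-- The total antisymmetrizer `A_n = Σ_{π ∈ S_n} (-1)^π σ_π`. -/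
def Aop {T : ℕ → Type*} [∀ n, AddCommGroup (T n)] [∀ n, Module ℂ (T n)]
    (σop : ∀ n, Equiv.Perm (Fin n) → Module.End ℂ (T n)) (n : ℕ) :
    Module.End ℂ (T n) :=
  ∑ π : Equiv.Perm (Fin n), (((Equiv.Perm.sign π : ℤ) : ℂ)) • σop n π

/-- The set of `(k,l)`-shuffles in `S_{k+l}`: permutations preserving the
relative order of `{0,…,k-1}` and of `{k,…,k+l-1}`. -/
def shuffles (k l : ℕ) : Finset (Equiv.Perm (Fin (k + l))) :=
  Finset.univ.filter (fun π => ∀ i j : Fin (k + l), i < j →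
    ((j : ℕ) < k ∨ k ≤ (i : ℕ)) → π i < π j)

/-- The shuffle sum `A_{k,l} = Σ_{π ∈ S_{k,l}} (-1)^π σ_{π⁻¹}`. -/
def Ash {T : ℕ → Type*} [∀ n, AddCommGroup (T n)] [∀ n, Module ℂ (T n)]
    (σop : ∀ n, Equiv.Perm (Fin n) → Module.End ℂ (T n)) (k l : ℕ) :
    Module.End ℂ (T (k + l)) :=
  ∑ π ∈ shuffles k l, (((Equiv.Perm.sign π : ℤ) : ℂ)) • σop (k + l) π⁻¹

section Comb

variable {n : ℕ}

private lemma aswap_mul_self (n i : ℕ) : aswap n i * aswap n i = 1 := by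
  unfold aswap; split
  · exact Equiv.swap_mul_self _ _
  · simp

private lemma strictMono_of_adj {f : Fin n → Fin n}
    (h : ∀ i : ℕ, (hi : i + 1 < n) → f ⟨i, Nat.lt_of_succ_lt hi⟩ < f ⟨i + 1, hi⟩) :
    StrictMono f := by
  intro x y hxy
  obtain ⟨x, hx⟩ := x; obtain ⟨y, hy⟩ := y
  have hxy' : x < y := hxy
  clear hxy
  induction y with
  | zero => omega
  | succ m ih =>
    have hm : m < n := by omega
    rcases Nat.lt_or_ge x m with h1 | h1
    · exact lt_trans (ih hm h1) (h m hy)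
    · have hxm : x = m := by omega
      subst hxm
      exact h x hy

private lemma le_apply_of_strictMono {f : Fin n → Fin n} (h : StrictMono f) :
    ∀ x : Fin n, (x : ℕ) ≤ (f x : ℕ) := by
  intro ⟨v, hv⟩
  induction v with
  | zero => exact Nat.zero_le _
  | succ m ih =>
    have h1 : f ⟨m, by omega⟩ < f ⟨m + 1, hv⟩ := h (by simp [Fin.lt_def])
    have h2 := ih (by omega)
    rw [Fin.lt_def] at h1
    simp only [Fin.val_mk] at h1 h2 ⊢
    omega

private lemma perm_eq_one_of_strictMono {π : Equiv.Perm (Fin n)}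
    (h : StrictMono (π : Fin n → Fin n)) : π = 1 := by
  have hinv : StrictMono (π.symm : Fin n → Fin n) := by
    intro a b hab
    rcases lt_trichotomy (π.symm a) (π.symm b) with hc | hc | hc
    · exact hc
    · exact absurd (congrArg π hc) (by simp [Fin.ext_iff]; omega)
    · exact absurd (h hc) (by simp; omega)
  ext x
  have h1 := le_apply_of_strictMono h x
  have h2 := le_apply_of_strictMono hinv (π x)
  simp only [Equiv.symm_apply_apply] at h2
  simp only [Equiv.Perm.one_apply]
  omega

/-- key swap-order fact -/
private lemma swap_lt {i : ℕ} (hi : i + 1 < n) {x y : Fin n} (hxy : x < y)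
    (hne : ¬(x = (⟨i, Nat.lt_of_succ_lt hi⟩ : Fin n) ∧ y = (⟨i + 1, hi⟩ : Fin n))) :
    Equiv.swap (⟨i, Nat.lt_of_succ_lt hi⟩ : Fin n) ⟨i + 1, hi⟩ x <
      Equiv.swap (⟨i, Nat.lt_of_succ_lt hi⟩ : Fin n) ⟨i + 1, hi⟩ y := by
  simp only [Equiv.swap_apply_def, Fin.lt_def, Fin.ext_iff] at *
  split_ifs <;> simp_all <;> omega

private lemma invCount_mul_aswap {i : ℕ} (hi : i + 1 < n) (π : Equiv.Perm (Fin n))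
    (hd : π ⟨i + 1, hi⟩ < π ⟨i, Nat.lt_of_succ_lt hi⟩) :
    invCount (π * aswap n i) + 1 = invCount π := by
  classical
  set a : Fin n := ⟨i, Nat.lt_of_succ_lt hi⟩
  set b : Fin n := ⟨i + 1, hi⟩
  have hs : aswap n i = Equiv.swap a b := by unfold aswap; rw [dif_pos hi]
  set s : Equiv.Perm (Fin n) := Equiv.swap a b with hsdef
  have hab : a < b := by simp [a, b, Fin.lt_def]
  have hmem : (a, b) ∈ Finset.univ.filter
      (fun p : Fin n × Fin n => p.1 < p.2 ∧ π p.2 < π p.1) := by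
    simp [hab, hd]
  have hcard : invCount (π * aswap n i) =
      ((Finset.univ.filter (fun p : Fin n × Fin n => p.1 < p.2 ∧ π p.2 < π p.1)).erase
        (a, b)).card := by
    apply Finset.card_nbij' (i := fun p => (s p.1, s p.2)) (j := fun p => (s p.1, s p.2))
    · intro p hp
      simp only [invCount, Finset.mem_coe, Finset.mem_filter, Finset.mem_univ, true_and, hs,
        Equiv.Perm.mul_apply] at hp
      have hpne : ¬(p.1 = a ∧ p.2 = b) := by
        rintro ⟨h1, h2⟩
        rw [h1, h2] at hp
        have := hp.2
        simp only [hsdef, Equiv.swap_apply_left, Equiv.swap_apply_right] at this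
        exact absurd hd (asymm this)
      have hlt : s p.1 < s p.2 := swap_lt hi hp.1 hpne
      have hne2 : (s p.1, s p.2) ≠ (a, b) := by
        intro hcontra
        have h1 : s p.1 = a := congrArg Prod.fst hcontra
        have h2 : s p.2 = b := congrArg Prod.snd hcontra
        have : p.1 = s a := by rw [← h1]; simp [s]
        have hb' : p.2 = s b := by rw [← h2]; simp [s]
        rw [Equiv.swap_apply_left] at this
        rw [Equiv.swap_apply_right] at hb'
        have := hp.1
        rw [‹p.1 = b›, hb'] at this
        exact absurd this (not_lt.2 hab.le)
      refine Finset.mem_erase.2 ⟨hne2, ?_⟩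
      simp only [Finset.mem_filter, Finset.mem_univ, true_and]
      exact ⟨hlt, hp.2⟩
    · intro p hp
      rw [Finset.mem_coe, Finset.mem_erase] at hp
      obtain ⟨hne, hp⟩ := hp
      simp only [Finset.mem_filter, Finset.mem_univ, true_and] at hp
      have hpne : ¬(p.1 = a ∧ p.2 = b) := by
        rintro ⟨h1, h2⟩; exact hne (by rw [← h1, ← h2])
      have hlt : s p.1 < s p.2 := swap_lt hi hp.1 hpne
      simp only [invCount, Finset.mem_coe, Finset.mem_filter, Finset.mem_univ, true_and, hs,
        Equiv.Perm.mul_apply]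
      constructor
      · exact hlt
      · show π (s (s p.2)) < π (s (s p.1))
        simp only [s, Equiv.swap_apply_self]
        exact hp.2
    · intro p _; simp [s, Equiv.swap_apply_self]
    · intro p _; simp [s, Equiv.swap_apply_self]
  rw [hcard, Finset.card_erase_add_one hmem]
  rfl

private lemma exists_reduced_word (n : ℕ) (π : Equiv.Perm (Fin n)) :
    ∃ w : List ℕ, (∀ i ∈ w, i + 1 < n) ∧ (w.map (aswap n)).prod = π ∧
      w.length = invCount π := by
  generalize hm : invCount π = m
  induction m generalizing π with
  | zero =>
    refine ⟨[], by simp, ?_, by simp⟩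
    have hsm : StrictMono (π : Fin n → Fin n) := by
      apply strictMono_of_adj
      intro i hi
      have hne : π ⟨i, Nat.lt_of_succ_lt hi⟩ ≠ π ⟨i + 1, hi⟩ := by
        intro hcontra
        have := π.injective hcontra
        simp [Fin.ext_iff] at this
      rcases lt_or_gt_of_ne hne with h | h
      · exact h
      · exfalso
        have : ((⟨i, Nat.lt_of_succ_lt hi⟩ : Fin n), (⟨i + 1, hi⟩ : Fin n)) ∈
            Finset.univ.filter (fun p : Fin n × Fin n => p.1 < p.2 ∧ π p.2 < π p.1) := by
          simp only [Finset.mem_filter, Finset.mem_univ, true_and]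
          exact ⟨by simp [Fin.lt_def], h⟩
        have hcard0 : (Finset.univ.filter
            (fun p : Fin n × Fin n => p.1 < p.2 ∧ π p.2 < π p.1)).card = 0 := hm
        rw [Finset.card_eq_zero] at hcard0
        simp [hcard0] at this
    simp [perm_eq_one_of_strictMono hsm]
  | succ m ih =>
    -- find a descent
    have hdesc : ∃ i : ℕ, ∃ hi : i + 1 < n, π ⟨i + 1, hi⟩ < π ⟨i, Nat.lt_of_succ_lt hi⟩ := by
      by_contra hno
      push_neg at hno
      have hsm : StrictMono (π : Fin n → Fin n) := by
        apply strictMono_of_adj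
        intro i hi
        have hne : π ⟨i, Nat.lt_of_succ_lt hi⟩ ≠ π ⟨i + 1, hi⟩ := by
          intro hcontra
          have := π.injective hcontra
          simp [Fin.ext_iff] at this
        rcases lt_or_gt_of_ne hne with h | h
        · exact h
        · exact absurd h (not_lt.2 (hno i hi))
      have : π = 1 := perm_eq_one_of_strictMono hsm
      rw [this] at hm
      have : invCount (1 : Equiv.Perm (Fin n)) = 0 := by
        unfold invCount
        rw [Finset.card_eq_zero, Finset.filter_eq_empty_iff]
        rintro p -
        simp only [Equiv.Perm.one_apply]
        rintro ⟨h1, h2⟩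
        exact absurd h2 (not_lt.2 h1.le)
      omega
    obtain ⟨i, hi, hd⟩ := hdesc
    have hinv : invCount (π * aswap n i) = m := by
      have := invCount_mul_aswap hi π hd
      omega
    obtain ⟨w, hw, hwp, hwl⟩ := ih (π * aswap n i) hinv
    refine ⟨w ++ [i], ?_, ?_, ?_⟩
    · intro j hj
      rcases List.mem_append.1 hj with h | h
      · exact hw j h
      · simp at h; omega
    · rw [List.map_append, List.prod_append, hwp]
      simp only [List.map_cons, List.map_nil, List.prod_cons, List.prod_nil, mul_one]
      rw [mul_assoc, aswap_mul_self, mul_one]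
    · rw [List.length_append, hwl]; simp

end Comb

section Block

variable {k l : ℕ}

private def blockPerm (α : Equiv.Perm (Fin k)) (β : Equiv.Perm (Fin l)) :
    Equiv.Perm (Fin (k + l)) :=
  finSumFinEquiv.permCongr (Equiv.sumCongr α β)

private lemma blockPerm_apply_castAdd (α : Equiv.Perm (Fin k)) (β : Equiv.Perm (Fin l))
    (u : Fin k) : blockPerm α β (Fin.castAdd l u) = Fin.castAdd l (α u) := by
  simp [blockPerm, Equiv.permCongr_apply]

private lemma blockPerm_apply_natAdd (α : Equiv.Perm (Fin k)) (β : Equiv.Perm (Fin l))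
    (u : Fin l) : blockPerm α β (Fin.natAdd k u) = Fin.natAdd k (β u) := by
  simp [blockPerm, Equiv.permCongr_apply]

private lemma blockPerm_apply_of_lt (α : Equiv.Perm (Fin k)) (β : Equiv.Perm (Fin l))
    {x : Fin (k + l)} (h : (x : ℕ) < k) :
    blockPerm α β x = Fin.castAdd l (α ⟨x, h⟩) := by
  have key : ∀ y : Fin k, x = Fin.castAdd l y → blockPerm α β x = Fin.castAdd l (α y) := by
    rintro y rfl; exact blockPerm_apply_castAdd α β y
  exact key ⟨x, h⟩ (by simp [Fin.ext_iff])

private lemma blockPerm_apply_of_ge (α : Equiv.Perm (Fin k)) (β : Equiv.Perm (Fin l))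
    {x : Fin (k + l)} (h : k ≤ (x : ℕ)) :
    blockPerm α β x = Fin.natAdd k (β ⟨(x : ℕ) - k, by omega⟩) := by
  have key : ∀ y : Fin l, x = Fin.natAdd k y → blockPerm α β x = Fin.natAdd k (β y) := by
    rintro y rfl; exact blockPerm_apply_natAdd α β y
  exact key ⟨(x : ℕ) - k, by omega⟩ (by simp [Fin.ext_iff]; omega)

private lemma blockPerm_lt_iff (α : Equiv.Perm (Fin k)) (β : Equiv.Perm (Fin l))
    (x : Fin (k + l)) : ((blockPerm α β x : Fin (k + l)) : ℕ) < k ↔ (x : ℕ) < k := by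
  by_cases h : (x : ℕ) < k
  · rw [blockPerm_apply_of_lt α β h]
    simpa using h
  · rw [blockPerm_apply_of_ge α β (by omega)]
    simp only [Fin.natAdd]
    constructor <;> intro <;> omega

private lemma blockPerm_mul (α α' : Equiv.Perm (Fin k)) (β β' : Equiv.Perm (Fin l)) :
    blockPerm (α * α') (β * β') = blockPerm α β * blockPerm α' β' := by
  ext x
  rcases lt_or_ge (x : ℕ) k with h | h
  · rw [Equiv.Perm.mul_apply, blockPerm_apply_of_lt _ _ h, blockPerm_apply_of_lt _ _ h,
      blockPerm_apply_castAdd]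
    rfl
  · rw [Equiv.Perm.mul_apply, blockPerm_apply_of_ge _ _ h, blockPerm_apply_of_ge _ _ h,
      blockPerm_apply_natAdd]
    rfl

private lemma blockPerm_one : blockPerm (1 : Equiv.Perm (Fin k)) (1 : Equiv.Perm (Fin l)) = 1 := by
  ext x
  rcases lt_or_ge (x : ℕ) k with h | h
  · rw [blockPerm_apply_of_lt _ _ h]; simp
  · rw [blockPerm_apply_of_ge _ _ h]; simp; omega

private lemma blockPerm_aswap_left {i : ℕ} (hi : i + 1 < k) :
    blockPerm (aswap k i) (1 : Equiv.Perm (Fin l)) = aswap (k + l) i := by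
  have hi' : i + 1 < k + l := by omega
  ext x
  unfold aswap
  rw [dif_pos hi, dif_pos hi']
  rcases lt_or_ge (x : ℕ) k with h | h
  · rw [blockPerm_apply_of_lt _ _ h]
    simp only [Equiv.swap_apply_def, Fin.ext_iff, Fin.val_mk, Fin.coe_castAdd]
    split_ifs <;> simp_all <;> omega
  · rw [blockPerm_apply_of_ge _ _ h]
    rw [Equiv.swap_apply_of_ne_of_ne (by simp [Fin.ext_iff]; omega) (by simp [Fin.ext_iff]; omega)]
    simp only [Equiv.Perm.one_apply, Fin.coe_natAdd, Fin.val_mk]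
    omega

private lemma blockPerm_aswap_right {i : ℕ} (hi : i + 1 < l) :
    blockPerm (1 : Equiv.Perm (Fin k)) (aswap l i) = aswap (k + l) (k + i) := by
  have hi' : k + i + 1 < k + l := by omega
  ext x
  unfold aswap
  rw [dif_pos hi, dif_pos hi']
  rcases lt_or_ge (x : ℕ) k with h | h
  · rw [blockPerm_apply_of_lt _ _ h]
    rw [Equiv.swap_apply_of_ne_of_ne (by simp [Fin.ext_iff]; omega) (by simp [Fin.ext_iff]; omega)]
    simp only [Equiv.Perm.one_apply, Fin.coe_castAdd, Fin.val_mk]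
  · rw [blockPerm_apply_of_ge _ _ h]
    simp only [Equiv.swap_apply_def, Fin.ext_iff, Fin.val_mk, Fin.coe_natAdd]
    split_ifs <;> simp_all <;> omega

private lemma blockPerm_word_left (w : List ℕ) (hw : ∀ i ∈ w, i + 1 < k) :
    blockPerm ((w.map (aswap k)).prod) (1 : Equiv.Perm (Fin l)) =
      ((w.map (aswap (k + l))).prod) := by
  induction w with
  | nil => simpa using blockPerm_one
  | cons a t ih =>
    simp only [List.map_cons, List.prod_cons]
    rw [show (1 : Equiv.Perm (Fin l)) = 1 * 1 by simp, blockPerm_mul,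
      blockPerm_aswap_left (hw a List.mem_cons_self), ih (fun i hi => hw i (List.mem_cons_of_mem a hi))]

private lemma blockPerm_word_right (w : List ℕ) (hw : ∀ i ∈ w, i + 1 < l) :
    blockPerm (1 : Equiv.Perm (Fin k)) ((w.map (aswap l)).prod) =
      (((w.map (k + ·)).map (aswap (k + l))).prod) := by
  induction w with
  | nil => simpa using blockPerm_one
  | cons a t ih =>
    simp only [List.map_cons, List.prod_cons]
    rw [show (1 : Equiv.Perm (Fin k)) = 1 * 1 by simp, blockPerm_mul,
      blockPerm_aswap_right (hw a List.mem_cons_self), ih (fun i hi => hw i (List.mem_cons_of_mem a hi))]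

private lemma invCount_blockPerm (α : Equiv.Perm (Fin k)) (β : Equiv.Perm (Fin l)) :
    invCount (blockPerm α β) = invCount α + invCount β := by
  classical
  set b := blockPerm α β with hb
  set S := Finset.univ.filter
    (fun p : Fin (k + l) × Fin (k + l) => p.1 < p.2 ∧ b p.2 < b p.1) with hS
  have hsplit : S = S.filter (fun p => (p.2 : ℕ) < k) ∪ S.filter (fun p => k ≤ (p.1 : ℕ)) := by
    ext p
    simp only [Finset.mem_union, Finset.mem_filter]
    constructor
    · intro hp
      by_cases h2 : (p.2 : ℕ) < k
      · exact Or.inl ⟨hp, h2⟩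
      · refine Or.inr ⟨hp, ?_⟩
        by_contra h1
        push_neg at h1
        rw [hS, Finset.mem_filter] at hp
        have hinv := hp.2.2
        rw [Fin.lt_def] at hinv
        have e1 := (blockPerm_lt_iff α β p.1).2 h1
        have e2 := (blockPerm_lt_iff α β p.2)
        rw [← hb] at e1 e2
        omega
    · rintro (⟨hp, _⟩ | ⟨hp, _⟩) <;> exact hp
  have hdisj : Disjoint (S.filter (fun p => (p.2 : ℕ) < k))
      (S.filter (fun p => k ≤ (p.1 : ℕ))) := by
    rw [Finset.disjoint_left]
    intro p hp1 hp2
    rw [Finset.mem_filter] at hp1 hp2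
    have hlt : p.1 < p.2 := by
      have := hp1.1
      rw [hS, Finset.mem_filter] at this
      exact this.2.1
    rw [Fin.lt_def] at hlt
    have := hp1.2
    have := hp2.2
    omega
  have hL : (S.filter (fun p => (p.2 : ℕ) < k)).card = invCount α := by
    apply Finset.card_bij
      (i := fun p hp => ((⟨(p.1 : ℕ), by
          rw [Finset.mem_filter, hS, Finset.mem_filter] at hp
          have := hp.1.2.1
          rw [Fin.lt_def] at this
          have := hp.2
          omega⟩ : Fin k),
        (⟨(p.2 : ℕ), by rw [Finset.mem_filter] at hp; exact hp.2⟩ : Fin k)))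
    · intro p hp
      rw [Finset.mem_filter, hS, Finset.mem_filter] at hp
      obtain ⟨⟨-, h12, hinv⟩, h2k⟩ := hp
      have h1k : (p.1 : ℕ) < k := by rw [Fin.lt_def] at h12; omega
      simp only [invCount, Finset.mem_filter, Finset.mem_univ, true_and]
      constructor
      · rw [Fin.lt_def] at h12 ⊢; exact h12
      · rw [hb, blockPerm_apply_of_lt α β h1k, blockPerm_apply_of_lt α β h2k] at hinv
        rw [Fin.lt_def] at hinv ⊢
        simpa using hinv
    · intro p hp q hq hpq
      have h1 := congrArg (fun r => ((r.1 : ℕ), (r.2 : ℕ))) hpq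
      simp only [Fin.val_mk] at h1
      ext
      · exact congrArg Prod.fst h1
      · exact congrArg Prod.snd h1
    · intro q hq
      simp only [invCount, Finset.mem_filter, Finset.mem_univ, true_and] at hq
      obtain ⟨h12, hinv⟩ := hq
      refine ⟨(Fin.castAdd l q.1, Fin.castAdd l q.2), ?_, ?_⟩
      · rw [Finset.mem_filter, hS, Finset.mem_filter]
        refine ⟨⟨Finset.mem_univ _, ?_, ?_⟩, by simpa using q.2.isLt⟩
        · rw [Fin.lt_def] at h12 ⊢; simpa using h12
        · rw [hb, blockPerm_apply_castAdd, blockPerm_apply_castAdd]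
          rw [Fin.lt_def] at hinv ⊢
          simpa using hinv
      · simp [Fin.ext_iff]
  have hR : (S.filter (fun p => k ≤ (p.1 : ℕ))).card = invCount β := by
    apply Finset.card_bij
      (i := fun p hp => ((⟨(p.1 : ℕ) - k, by
          rw [Finset.mem_filter] at hp
          have := p.1.isLt
          have := hp.2
          omega⟩ : Fin l),
        (⟨(p.2 : ℕ) - k, by
          rw [Finset.mem_filter] at hp
          have h1 := hp.2
          have h2 : p.1 < p.2 := by
            have := hp.1; rw [hS, Finset.mem_filter] at this; exact this.2.1
          rw [Fin.lt_def] at h2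
          have := p.2.isLt
          omega⟩ : Fin l)))
    · intro p hp
      rw [Finset.mem_filter, hS, Finset.mem_filter] at hp
      obtain ⟨⟨-, h12, hinv⟩, h1k⟩ := hp
      have h2k : k ≤ (p.2 : ℕ) := by rw [Fin.lt_def] at h12; omega
      simp only [invCount, Finset.mem_filter, Finset.mem_univ, true_and]
      constructor
      · rw [Fin.lt_def] at h12 ⊢
        simp only [Fin.val_mk]
        omega
      · rw [hb, blockPerm_apply_of_ge α β h1k, blockPerm_apply_of_ge α β h2k] at hinv
        rw [Fin.lt_def] at hinv ⊢
        simp only [Fin.coe_natAdd] at hinv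
        convert Nat.lt_of_add_lt_add_left hinv using 2 <;> simp [Fin.ext_iff]
    · intro p hp q hq hpq
      rw [Finset.mem_filter] at hp hq
      have hp1 := hp.2
      have hq1 := hq.2
      have hp12 : p.1 < p.2 := by
        have := hp.1; rw [hS, Finset.mem_filter] at this; exact this.2.1
      have hq12 : q.1 < q.2 := by
        have := hq.1; rw [hS, Finset.mem_filter] at this; exact this.2.1
      rw [Fin.lt_def] at hp12 hq12
      have h1 := congrArg (fun r => ((r.1 : ℕ), (r.2 : ℕ))) hpq
      simp only [Fin.val_mk] at h1
      have e1 : (p.1 : ℕ) - k = (q.1 : ℕ) - k := congrArg Prod.fst h1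
      have e2 : (p.2 : ℕ) - k = (q.2 : ℕ) - k := congrArg Prod.snd h1
      ext <;> [skip; skip] <;> omega
    · intro q hq
      simp only [invCount, Finset.mem_filter, Finset.mem_univ, true_and] at hq
      obtain ⟨h12, hinv⟩ := hq
      refine ⟨(Fin.natAdd k q.1, Fin.natAdd k q.2), ?_, ?_⟩
      · rw [Finset.mem_filter, hS, Finset.mem_filter]
        refine ⟨⟨Finset.mem_univ _, ?_, ?_⟩, by simp⟩
        · rw [Fin.lt_def] at h12 ⊢
          simp only [Fin.coe_natAdd]
          omega
        · rw [hb, blockPerm_apply_natAdd, blockPerm_apply_natAdd]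
          rw [Fin.lt_def] at hinv ⊢
          simp only [Fin.coe_natAdd]
          omega
      · simp [Fin.ext_iff]
  have : invCount b = (S.filter (fun p => (p.2 : ℕ) < k)).card +
      (S.filter (fun p => k ≤ (p.1 : ℕ))).card := by
    rw [← Finset.card_union_of_disjoint hdisj, ← hsplit]
    rfl
  rw [← hb] at *
  rw [this, hL, hR]

end Block

section Shuf

variable {k l : ℕ}

private lemma mem_shuffles_iff {π : Equiv.Perm (Fin (k + l))} :
    π ∈ shuffles k l ↔ ∀ i j : Fin (k + l), i < j →
      ((j : ℕ) < k ∨ k ≤ (i : ℕ)) → π i < π j := by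
  simp [shuffles]

private lemma invCount_blockPerm_mul {α : Equiv.Perm (Fin k)} {β : Equiv.Perm (Fin l)}
    {π : Equiv.Perm (Fin (k + l))} (hπ : π ∈ shuffles k l) :
    invCount (blockPerm α β * π⁻¹) = invCount (blockPerm α β) + invCount π⁻¹ := by
  classical
  rw [mem_shuffles_iff] at hπ
  set b := blockPerm α β with hbdef
  set s := π⁻¹ with hsdef
  set γ := b * s with hγdef
  set Sγ := Finset.univ.filter
    (fun p : Fin (k + l) × Fin (k + l) => p.1 < p.2 ∧ γ p.2 < γ p.1) with hSγ
  set Ss := Finset.univ.filter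
    (fun p : Fin (k + l) × Fin (k + l) => p.1 < p.2 ∧ s p.2 < s p.1) with hSs
  -- C1 : inversions of s are inversions of γ
  have hcross : ∀ p : Fin (k + l) × Fin (k + l), p.1 < p.2 → s p.2 < s p.1 →
      ((s p.2 : ℕ) < k ∧ k ≤ (s p.1 : ℕ)) := by
    intro p h12 hs12
    by_contra hcon
    have hvu : (s p.2 : ℕ) < (s p.1 : ℕ) := hs12
    have hsame : ((s p.1 : ℕ) < k ∨ k ≤ (s p.2 : ℕ)) := by omega
    have := hπ (s p.2) (s p.1) hs12 hsame
    rw [hsdef] at this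
    simp only [Equiv.Perm.inv_def, Equiv.apply_symm_apply] at this
    exact absurd h12 (not_lt.2 this.le)
  have hsub : Ss ⊆ Sγ := by
    intro p hp
    rw [hSs, Finset.mem_filter] at hp
    obtain ⟨-, h12, hs12⟩ := hp
    obtain ⟨hv, hu⟩ := hcross p h12 hs12
    rw [hSγ, Finset.mem_filter]
    refine ⟨Finset.mem_univ _, h12, ?_⟩
    have e2 : ((b (s p.2) : Fin (k + l)) : ℕ) < k := (blockPerm_lt_iff α β _).2 hv
    have e1 : ¬ ((b (s p.1) : Fin (k + l)) : ℕ) < k := by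
      rw [blockPerm_lt_iff α β _]; omega
    show b (s p.2) < b (s p.1)
    rw [Fin.lt_def]; omega
  -- C2 : the rest bijects with inversions of b
  have hrest : (Sγ \ Ss).card = invCount b := by
    apply Finset.card_bij (i := fun p hp => (s p.1, s p.2))
    · intro p hp
      rw [Finset.mem_sdiff, hSγ, Finset.mem_filter, hSs, Finset.mem_filter] at hp
      obtain ⟨⟨-, h12, hγ12⟩, hns⟩ := hp
      have hss : s p.1 < s p.2 := by
        rcases lt_trichotomy (s p.1) (s p.2) with h | h | h
        · exact h
        · exact absurd (s.injective h) (by intro hc; rw [hc] at h12; exact lt_irrefl _ h12)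
        · exact absurd ⟨Finset.mem_univ p, ⟨h12, h⟩⟩ hns
      simp only [invCount, Finset.mem_filter, Finset.mem_univ, true_and]
      exact ⟨hss, hγ12⟩
    · intro p hp q hq hpq
      have h1 : s p.1 = s q.1 := congrArg Prod.fst hpq
      have h2 : s p.2 = s q.2 := congrArg Prod.snd hpq
      ext
      · exact congrArg Fin.val (s.injective h1)
      · exact congrArg Fin.val (s.injective h2)
    · intro q hq
      simp only [invCount, Finset.mem_filter, Finset.mem_univ, true_and] at hq
      obtain ⟨h12, hinv⟩ := hq
      have hsame : ((q.2 : ℕ) < k ∨ k ≤ (q.1 : ℕ)) := by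
        by_contra hcon
        push_neg at hcon
        have h1k : (q.1 : ℕ) < k := by rw [Fin.lt_def] at h12; omega
        have e1 := (blockPerm_lt_iff α β q.1).2 h1k
        have e2 : ¬ ((blockPerm α β q.2 : Fin (k + l)) : ℕ) < k := by
          rw [blockPerm_lt_iff α β _]; omega
        rw [hbdef, Fin.lt_def] at hinv
        omega
      refine ⟨(π q.1, π q.2), ?_, ?_⟩
      · have hππ : π q.1 < π q.2 := hπ q.1 q.2 h12 hsame
        rw [Finset.mem_sdiff, hSγ, Finset.mem_filter, hSs, Finset.mem_filter]
        have hs1 : s (π q.1) = q.1 := by rw [hsdef]; simp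
        have hs2 : s (π q.2) = q.2 := by rw [hsdef]; simp
        refine ⟨⟨Finset.mem_univ _, hππ, ?_⟩, ?_⟩
        · show b (s (π q.2)) < b (s (π q.1))
          rw [hs1, hs2]
          exact hinv
        · simp only [Finset.mem_univ, true_and, not_and, hs1, hs2]
          intro
          exact not_lt.2 h12.le
      · simp [hsdef]
  have htotal : invCount γ = (Sγ \ Ss).card + Ss.card :=
    (Finset.card_sdiff_add_card_eq_card hsub).symm
  have : invCount s = Ss.card := rfl
  rw [hγdef] at htotal ⊢
  rw [htotal, hrest, this]

end Shuf

section Decomp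

variable {k l : ℕ}

private def IsBlk (k l : ℕ) (b : Equiv.Perm (Fin (k + l))) : Prop :=
  ∀ u : Fin (k + l), ((b u : Fin (k + l)) : ℕ) < k ↔ (u : ℕ) < k

private lemma isBlk_blockPerm (α : Equiv.Perm (Fin k)) (β : Equiv.Perm (Fin l)) :
    IsBlk k l (blockPerm α β) := fun u => blockPerm_lt_iff α β u

private lemma isBlk_inv {b : Equiv.Perm (Fin (k + l))} (hb : IsBlk k l b) :
    IsBlk k l b⁻¹ := by
  intro u
  have := hb (b⁻¹ u)
  simp only [Equiv.Perm.inv_def, Equiv.apply_symm_apply] at this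
  exact this.symm

/-- A block-preserving permutation obtained from two shuffles must be trivial. -/
private lemma shuffle_unique {π π' : Equiv.Perm (Fin (k + l))}
    (hπ : π ∈ shuffles k l) (hπ' : π' ∈ shuffles k l)
    (hblk : IsBlk k l (π'⁻¹ * π)) : π = π' := by
  rw [mem_shuffles_iff] at hπ hπ'
  set c := π'⁻¹ * π with hc
  have hsm : StrictMono (c : Fin (k + l) → Fin (k + l)) := by
    intro u v huv
    by_cases hsame : ((v : ℕ) < k ∨ k ≤ (u : ℕ))
    · -- same block
      have hcuv : ((c v : Fin (k + l)) : ℕ) < k ∨ k ≤ ((c u : Fin (k + l)) : ℕ) := by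
        rcases hsame with h | h
        · left; exact (hblk v).2 h
        · right; have := (hblk u).not; rw [Fin.lt_def] at huv; push_neg at this; omega
      rcases lt_trichotomy (c u) (c v) with h | h | h
      · exact h
      · exact absurd (c.injective h) (fun hcon => by rw [hcon] at huv; exact lt_irrefl _ huv)
      · exfalso
        have hcond : ((c u : Fin (k + l)) : ℕ) < k ∨ k ≤ ((c v : Fin (k + l)) : ℕ) := by
          rcases hsame with hv | hu2
          · left
            exact (hblk u).2 (by rw [Fin.lt_def] at huv; omega)
          · right
            have h2 : ¬ ((c v : Fin (k + l)) : ℕ) < k := fun hcon => by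
              have := (hblk v).1 hcon; omega
            omega
        have := hπ' (c v) (c u) h hcond
        rw [hc] at this
        simp only [Equiv.Perm.mul_apply, Equiv.Perm.inv_def, Equiv.apply_symm_apply] at this
        have h2 := hπ u v huv hsame
        exact absurd h2 (not_lt.2 this.le)
    · -- cross block
      push_neg at hsame
      have h1 : (u : ℕ) < k := hsame.2
      have h2 : k ≤ (v : ℕ) := hsame.1
      have e1 : ((c u : Fin (k + l)) : ℕ) < k := (hblk u).2 h1
      have e2 : ¬ ((c v : Fin (k + l)) : ℕ) < k := by rw [hblk v]; omega
      rw [Fin.lt_def]; omega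
  rw [show π = π' * c by rw [hc]; group]
  have : c = 1 := perm_eq_one_of_strictMono hsm
  rw [this, mul_one]

private def restL (b : Equiv.Perm (Fin (k + l))) (hb : IsBlk k l b) : Equiv.Perm (Fin k) where
  toFun u := ⟨(b (Fin.castAdd l u) : Fin (k + l)), (hb _).2 (by simpa using u.isLt)⟩
  invFun u := ⟨(b⁻¹ (Fin.castAdd l u) : Fin (k + l)), (isBlk_inv hb _).2 (by simpa using u.isLt)⟩
  left_inv u := by
    have h : Fin.castAdd l (⟨(b (Fin.castAdd l u) : Fin (k + l)), (hb _).2 (by simpa using u.isLt)⟩ : Fin k)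
        = b (Fin.castAdd l u) := by simp [Fin.ext_iff]
    simp only [Fin.ext_iff, h]
    simp
  right_inv u := by
    have h : Fin.castAdd l (⟨(b⁻¹ (Fin.castAdd l u) : Fin (k + l)), (isBlk_inv hb _).2 (by simpa using u.isLt)⟩ : Fin k)
        = b⁻¹ (Fin.castAdd l u) := by simp [Fin.ext_iff]
    simp only [Fin.ext_iff, h]
    simp

private def restR (b : Equiv.Perm (Fin (k + l))) (hb : IsBlk k l b) : Equiv.Perm (Fin l) where
  toFun u := ⟨(b (Fin.natAdd k u) : Fin (k + l)) - k, by
    have h1 : ¬ ((b (Fin.natAdd k u) : Fin (k + l)) : ℕ) < k := by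
      rw [hb]; simp
    have := (b (Fin.natAdd k u)).isLt
    omega⟩
  invFun u := ⟨(b⁻¹ (Fin.natAdd k u) : Fin (k + l)) - k, by
    have h1 : ¬ ((b⁻¹ (Fin.natAdd k u) : Fin (k + l)) : ℕ) < k := by
      rw [isBlk_inv hb]; simp
    have := (b⁻¹ (Fin.natAdd k u)).isLt
    omega⟩
  left_inv u := by
    have h1 : ¬ ((b (Fin.natAdd k u) : Fin (k + l)) : ℕ) < k := by rw [hb]; simp
    have h : Fin.natAdd k (⟨(b (Fin.natAdd k u) : Fin (k + l)) - k, by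
        have := (b (Fin.natAdd k u)).isLt; omega⟩ : Fin l) = b (Fin.natAdd k u) := by
      simp [Fin.ext_iff]; omega
    simp only [Fin.ext_iff, h]
    simp
  right_inv u := by
    have h1 : ¬ ((b⁻¹ (Fin.natAdd k u) : Fin (k + l)) : ℕ) < k := by rw [isBlk_inv hb]; simp
    have h : Fin.natAdd k (⟨(b⁻¹ (Fin.natAdd k u) : Fin (k + l)) - k, by
        have := (b⁻¹ (Fin.natAdd k u)).isLt; omega⟩ : Fin l) = b⁻¹ (Fin.natAdd k u) := by
      simp [Fin.ext_iff]; rw [Equiv.Perm.inv_def] at h1; omega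
    simp only [Fin.ext_iff, h]
    simp

private lemma blockPerm_rest (b : Equiv.Perm (Fin (k + l))) (hb : IsBlk k l b) :
    blockPerm (restL b hb) (restR b hb) = b := by
  ext x
  rcases lt_or_ge (x : ℕ) k with h | h
  · rw [blockPerm_apply_of_lt _ _ h]
    have hx : Fin.castAdd l (⟨(x : ℕ), h⟩ : Fin k) = x := by simp [Fin.ext_iff]
    simp only [Fin.coe_castAdd, restL, Equiv.coe_fn_mk, hx]
  · rw [blockPerm_apply_of_ge _ _ h]
    have hx : Fin.natAdd k (⟨(x : ℕ) - k, by omega⟩ : Fin l) = x := by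
      simp [Fin.ext_iff]; omega
    simp only [Fin.coe_natAdd, restR, Equiv.coe_fn_mk, hx]
    have h1 : ¬ ((b x : Fin (k + l)) : ℕ) < k := by rw [hb]; omega
    omega

private lemma exists_decomp (γ : Equiv.Perm (Fin (k + l))) :
    ∃ (α : Equiv.Perm (Fin k)) (β : Equiv.Perm (Fin l)) (π : Equiv.Perm (Fin (k + l))),
      π ∈ shuffles k l ∧ γ = blockPerm α β * π⁻¹ := by
  classical
  set p : Fin (k + l) → Prop := fun x => ((γ x : Fin (k + l)) : ℕ) < k with hp
  set S : Finset (Fin (k + l)) := Finset.univ.filter p with hSdef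
  have hSk : S.card = k := by
    have himg : S.image γ = Finset.univ.filter (fun y : Fin (k + l) => (y : ℕ) < k) := by
      ext y
      simp only [Finset.mem_image, hSdef, Finset.mem_filter, Finset.mem_univ, true_and, hp]
      constructor
      · rintro ⟨x, hx, rfl⟩; exact hx
      · intro hy; exact ⟨γ⁻¹ y, by simpa using hy, by simp⟩
    have h1 : S.card = (S.image γ).card := (Finset.card_image_of_injective S γ.injective).symm
    rw [h1, himg]
    have hcard : (Finset.univ : Finset (Fin k)).card =
        (Finset.univ.filter (fun y : Fin (k + l) => (y : ℕ) < k)).card := by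
      apply Finset.card_bij (i := fun (q : Fin k) _ => Fin.castAdd l q)
      · intro a ha
        simp only [Finset.mem_filter, Finset.mem_univ, true_and]
        simpa using a.isLt
      · intro a ha b hb hab
        ext
        simpa [Fin.ext_iff] using hab
      · intro y hy
        simp only [Finset.mem_filter, Finset.mem_univ, true_and] at hy
        exact ⟨⟨(y : ℕ), hy⟩, Finset.mem_univ _, by simp [Fin.ext_iff]⟩
    rw [← hcard, Finset.card_univ, Fintype.card_fin]
  have hSc : Sᶜ.card = l := by
    rw [Finset.card_compl, hSk, Fintype.card_fin]
    omega
  set eS := S.orderIsoOfFin hSk with heS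
  set eC := Sᶜ.orderIsoOfFin hSc with heC
  set π : Equiv.Perm (Fin (k + l)) :=
    finSumFinEquiv.symm.trans ((Equiv.sumCongr eS.toEquiv
      (eC.toEquiv.trans (Equiv.subtypeEquivRight (fun x => Finset.mem_compl)))).trans
        (Equiv.sumCompl (· ∈ S))) with hπdef
  have hπlt : ∀ u : Fin (k + l), (h : (u : ℕ) < k) → π u = (eS ⟨(u : ℕ), h⟩ : Fin (k + l)) := by
    intro u h
    have key : ∀ y : Fin k, u = Fin.castAdd l y → π u = (eS y : Fin (k + l)) := by
      rintro y rfl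
      rw [hπdef]
      simp only [Equiv.trans_apply]
      rw [finSumFinEquiv_symm_apply_castAdd]
      simp
    exact key ⟨(u : ℕ), h⟩ (by simp [Fin.ext_iff])
  have hπge : ∀ u : Fin (k + l), (h : k ≤ (u : ℕ)) →
      π u = (eC ⟨(u : ℕ) - k, by have := u.isLt; omega⟩ : Fin (k + l)) := by
    intro u h
    have key : ∀ y : Fin l, u = Fin.natAdd k y → π u = (eC y : Fin (k + l)) := by
      rintro y rfl
      rw [hπdef]
      simp only [Equiv.trans_apply]
      rw [finSumFinEquiv_symm_apply_natAdd]
      simp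
    exact key ⟨(u : ℕ) - k, by have := u.isLt; omega⟩ (by simp [Fin.ext_iff]; omega)
  have hπsh : π ∈ shuffles k l := by
    rw [mem_shuffles_iff]
    intro i j hij hsame
    rcases hsame with h | h
    · have hik : (i : ℕ) < k := by rw [Fin.lt_def] at hij; omega
      rw [hπlt i hik, hπlt j h]
      have : (⟨(i : ℕ), hik⟩ : Fin k) < ⟨(j : ℕ), h⟩ := by rw [Fin.lt_def]; exact hij
      exact Subtype.coe_lt_coe.2 (eS.strictMono this)
    · have hjk : k ≤ (j : ℕ) := by rw [Fin.lt_def] at hij; omega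
      rw [hπge i h, hπge j hjk]
      have : (⟨(i : ℕ) - k, by have := i.isLt; omega⟩ : Fin l) <
          ⟨(j : ℕ) - k, by have := j.isLt; omega⟩ := by
        rw [Fin.lt_def]
        rw [Fin.lt_def] at hij
        simp only [Fin.val_mk]
        omega
      exact Subtype.coe_lt_coe.2 (eC.strictMono this)
  set b := γ * π with hbdef
  have hblk : IsBlk k l b := by
    intro u
    by_cases h : (u : ℕ) < k
    · have h1 : π u ∈ S := by
        rw [hπlt u h]
        exact (eS ⟨(u : ℕ), h⟩).2
      rw [hSdef, Finset.mem_filter] at h1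
      have : ((γ (π u) : Fin (k + l)) : ℕ) < k := h1.2
      rw [hbdef]
      simp only [Equiv.Perm.mul_apply]
      constructor <;> intro <;> [exact h; exact this]
    · have h1 : π u ∈ Sᶜ := by
        rw [hπge u (by omega)]
        exact (eC ⟨(u : ℕ) - k, by have := u.isLt; omega⟩).2
      rw [Finset.mem_compl, hSdef, Finset.mem_filter] at h1
      have : ¬ ((γ (π u) : Fin (k + l)) : ℕ) < k := by
        intro hcon
        exact h1 ⟨Finset.mem_univ _, hcon⟩
      rw [hbdef]
      simp only [Equiv.Perm.mul_apply]
      constructor <;> intro hx <;> [exact absurd hx this; exact absurd hx h]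
  refine ⟨restL b hblk, restR b hblk, π, hπsh, ?_⟩
  rw [blockPerm_rest b hblk, hbdef]
  group

private lemma decomp_inj {α α' : Equiv.Perm (Fin k)} {β β' : Equiv.Perm (Fin l)}
    {π π' : Equiv.Perm (Fin (k + l))} (hπ : π ∈ shuffles k l) (hπ' : π' ∈ shuffles k l)
    (h : blockPerm α β * π⁻¹ = blockPerm α' β' * π'⁻¹) :
    α = α' ∧ β = β' ∧ π = π' := by
  have hbb : (blockPerm α' β')⁻¹ * blockPerm α β = π'⁻¹ * π := by
    have h1 : blockPerm α β = blockPerm α' β' * π'⁻¹ * π := by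
      rw [← h]; group
    rw [h1]; group
  have hone : blockPerm α'⁻¹ β'⁻¹ * blockPerm α' β' = 1 := by
    rw [← blockPerm_mul, inv_mul_cancel, inv_mul_cancel, blockPerm_one]
  have hinv : (blockPerm α' β')⁻¹ = blockPerm α'⁻¹ β'⁻¹ :=
    (eq_inv_of_mul_eq_one_left hone).symm
  have hblk : IsBlk k l (π'⁻¹ * π) := by
    rw [← hbb, hinv, ← blockPerm_mul]
    exact isBlk_blockPerm _ _
  have hππ : π = π' := shuffle_unique hπ hπ' hblk
  subst hππ
  have hb : blockPerm α β = blockPerm α' β' := mul_right_cancel h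
  constructor
  · ext u
    have h1 := congrArg (fun f : Equiv.Perm (Fin (k + l)) => f (Fin.castAdd l u)) hb
    simp only [blockPerm_apply_castAdd] at h1
    have hv := congrArg Fin.val h1
    simp only [Fin.coe_castAdd] at hv
    exact hv
  constructor
  · ext u
    have h1 := congrArg (fun f : Equiv.Perm (Fin (k + l)) => f (Fin.natAdd k u)) hb
    simp only [blockPerm_apply_natAdd] at h1
    have hv := congrArg Fin.val h1
    simp only [Fin.coe_natAdd] at hv
    omega
  · rfl

end Decomp

section Tensor

variable {T : ℕ → Type*} [∀ n, AddCommGroup (T n)] [∀ n, Module ℂ (T n)]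
  (e : ∀ k l, (T k ⊗[ℂ] T l) ≃ₗ[ℂ] T (k + l))
  (tw : ∀ n : ℕ, ℕ → Module.End ℂ (T n))

private lemma tw_word_left
    (htwL : ∀ k l i : ℕ, i + 2 ≤ k → ∀ x : T k ⊗[ℂ] T l,
      tw (k + l) i (e k l x) = e k l (LinearMap.rTensor (T l) (tw k i) x))
    (k l : ℕ) (w : List ℕ) (hw : ∀ i ∈ w, i + 1 < k) (x : T k ⊗[ℂ] T l) :
    ((w.map (tw (k + l))).prod) (e k l x)
      = e k l (LinearMap.rTensor (T l) ((w.map (tw k)).prod) x) := by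
  induction w generalizing x with
  | nil => simp [Module.End.one_eq_id, LinearMap.rTensor_id]
  | cons a t ih =>
    simp only [List.map_cons, List.prod_cons, Module.End.mul_apply]
    rw [ih (fun i hi => hw i (List.mem_cons_of_mem a hi)) x,
      htwL k l a (by have := hw a List.mem_cons_self; omega)]
    congr 1
    rw [Module.End.mul_eq_comp, LinearMap.rTensor_comp, LinearMap.comp_apply]

private lemma tw_word_right
    (htwR : ∀ k l i : ℕ, ∀ x : T k ⊗[ℂ] T l,
      tw (k + l) (k + i) (e k l x) = e k l (LinearMap.lTensor (T k) (tw l i) x))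
    (k l : ℕ) (w : List ℕ) (x : T k ⊗[ℂ] T l) :
    (((w.map (k + ·)).map (tw (k + l))).prod) (e k l x)
      = e k l (LinearMap.lTensor (T k) ((w.map (tw l)).prod) x) := by
  induction w generalizing x with
  | nil => simp [Module.End.one_eq_id, LinearMap.lTensor_id]
  | cons a t ih =>
    simp only [List.map_cons, List.prod_cons, Module.End.mul_apply]
    rw [ih x, htwR k l a]
    congr 1
    rw [Module.End.mul_eq_comp, LinearMap.lTensor_comp, LinearMap.comp_apply]

end Tensor

section Main

variable {T : ℕ → Type*} [∀ n, AddCommGroup (T n)] [∀ n, Module ℂ (T n)]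

private lemma sigma_op_mul
    (tw : ∀ n : ℕ, ℕ → Module.End ℂ (T n))
    (σop : ∀ n, Equiv.Perm (Fin n) → Module.End ℂ (T n))
    (hσop : ∀ (n : ℕ) (π : Equiv.Perm (Fin n)) (w : List ℕ),
      (w.map (aswap n)).prod = π → w.length = invCount π →
      σop n π = (w.map (tw n)).prod)
    (n : ℕ) (f g : Equiv.Perm (Fin n))
    (h : invCount (f * g) = invCount f + invCount g) :
    σop n (f * g) = σop n f * σop n g := by
  obtain ⟨wf, -, pf, lf⟩ := exists_reduced_word n f
  obtain ⟨wg, -, pg, lg⟩ := exists_reduced_word n g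
  rw [hσop n f wf pf lf, hσop n g wg pg lg, ← List.prod_append, ← List.map_append,
    ← hσop n (f * g) (wf ++ wg)
      (by rw [List.map_append, List.prod_append, pf, pg])
      (by rw [List.length_append, lf, lg, h])]

end Main


/-!  STATEMENT 12: for a braid operator `σ` on `V ⊗ V`, the antisymmetrizers
built from the associated twists on the tensor powers `T n = V^{⊗n}` satisfy
`A_{k+l} = (A_k ⊗ A_l) ∘ A_{k,l}`.  The tensor powers, the twists `tw n i`
acting in slots `i, i+1`, and the operators `σ_π` (well-defined by the braid
relation via reduced words) are axiomatized. -/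

theorem antisymmetrizer_factorization
    {V : Type*} [AddCommGroup V] [Module ℂ V]
    (T : ℕ → Type*) [∀ n, AddCommGroup (T n)] [∀ n, Module ℂ (T n)]
    (e1 : T 1 ≃ₗ[ℂ] V)
    (e : ∀ k l, (T k ⊗[ℂ] T l) ≃ₗ[ℂ] T (k + l))
    (σ : (V ⊗[ℂ] V) →ₗ[ℂ] (V ⊗[ℂ] V))
    -- the braid relation for σ on (V ⊗ V) ⊗ V
    (hbraid :
      (LinearMap.rTensor V σ) ∘ₗ
        ((TensorProduct.assoc ℂ V V V).symm.toLinearMap ∘ₗ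
          (LinearMap.lTensor V σ) ∘ₗ (TensorProduct.assoc ℂ V V V).toLinearMap) ∘ₗ
        (LinearMap.rTensor V σ) =
      ((TensorProduct.assoc ℂ V V V).symm.toLinearMap ∘ₗ
          (LinearMap.lTensor V σ) ∘ₗ (TensorProduct.assoc ℂ V V V).toLinearMap) ∘ₗ
        (LinearMap.rTensor V σ) ∘ₗ
        ((TensorProduct.assoc ℂ V V V).symm.toLinearMap ∘ₗ
          (LinearMap.lTensor V σ) ∘ₗ (TensorProduct.assoc ℂ V V V).toLinearMap))
    -- the σ-twists acting in slots i, i+1 of T n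
    (tw : ∀ n : ℕ, ℕ → Module.End ℂ (T n))
    (htw2 : tw 2 0 = (e 1 1).toLinearMap ∘ₗ
      (TensorProduct.map e1.symm.toLinearMap e1.symm.toLinearMap) ∘ₗ σ ∘ₗ
      (TensorProduct.map e1.toLinearMap e1.toLinearMap) ∘ₗ (e 1 1).symm.toLinearMap)
    (htwL : ∀ k l i : ℕ, i + 2 ≤ k → ∀ x : T k ⊗[ℂ] T l,
      tw (k + l) i (e k l x) = e k l (LinearMap.rTensor (T l) (tw k i) x))
    (htwR : ∀ k l i : ℕ, ∀ x : T k ⊗[ℂ] T l,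
      tw (k + l) (k + i) (e k l x) = e k l (LinearMap.lTensor (T k) (tw l i) x))
    -- the operators σ_π, well-defined via reduced words
    (σop : ∀ n, Equiv.Perm (Fin n) → Module.End ℂ (T n))
    (hσop : ∀ (n : ℕ) (π : Equiv.Perm (Fin n)) (w : List ℕ),
      (w.map (aswap n)).prod = π → w.length = invCount π →
      σop n π = (w.map (tw n)).prod) :
    ∀ k l : ℕ,
      Aop σop (k + l) =
        (e k l).toLinearMap ∘ₗ
          (TensorProduct.map (Aop σop k) (Aop σop l)) ∘ₗ
          (e k l).symm.toLinearMap ∘ₗ (Ash σop k l) := by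
  intro k l
  classical
  -- σop of a block permutation factors through the tensor product
  have hblock : ∀ (α : Equiv.Perm (Fin k)) (β : Equiv.Perm (Fin l)),
      σop (k + l) (blockPerm α β) = (e k l).toLinearMap ∘ₗ
        (TensorProduct.map (σop k α) (σop l β)) ∘ₗ (e k l).symm.toLinearMap := by
    intro α β
    obtain ⟨wa, hwa, pa, la⟩ := exists_reduced_word k α
    obtain ⟨wb, hwb, pb, lb⟩ := exists_reduced_word l β
    have hprod : (((wa ++ wb.map (k + ·)).map (aswap (k + l))).prod) = blockPerm α β := by
      rw [List.map_append, List.prod_append, ← blockPerm_word_left wa hwa,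
        ← blockPerm_word_right wb hwb, pa, pb, ← blockPerm_mul, mul_one, one_mul]
    have hlen : (wa ++ wb.map (k + ·)).length = invCount (blockPerm α β) := by
      rw [invCount_blockPerm, List.length_append, List.length_map, la, lb]
    rw [hσop _ _ _ hprod hlen]
    apply LinearMap.ext
    intro y
    obtain ⟨x, rfl⟩ : ∃ x, y = e k l x := ⟨(e k l).symm y, ((e k l).apply_symm_apply y).symm⟩
    simp only [LinearMap.coe_comp, Function.comp_apply, LinearEquiv.coe_coe,
      LinearEquiv.symm_apply_apply]
    rw [List.map_append, List.prod_append, Module.End.mul_apply,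
      tw_word_right e tw htwR k l wb x, tw_word_left e tw htwL k l wa hwa _,
      ← hσop k α wa pa la, ← hσop l β wb pb lb]
    congr 1
    rw [← LinearMap.comp_apply, LinearMap.rTensor_comp_lTensor]
  -- composing with a shuffle inverse
  have hcomp : ∀ (α : Equiv.Perm (Fin k)) (β : Equiv.Perm (Fin l))
      (π : Equiv.Perm (Fin (k + l))), π ∈ shuffles k l →
      σop (k + l) (blockPerm α β) * σop (k + l) π⁻¹
        = σop (k + l) (blockPerm α β * π⁻¹) := by
    intro α β π hπ
    exact (sigma_op_mul tw σop hσop (k + l) (blockPerm α β) π⁻¹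
      (invCount_blockPerm_mul hπ)).symm
  -- signs multiply
  have hsign : ∀ (α : Equiv.Perm (Fin k)) (β : Equiv.Perm (Fin l))
      (π : Equiv.Perm (Fin (k + l))),
      (((Equiv.Perm.sign (blockPerm α β * π⁻¹) : ℤ) : ℂ))
        = (((Equiv.Perm.sign α : ℤ) : ℂ)) * (((Equiv.Perm.sign β : ℤ) : ℂ))
          * (((Equiv.Perm.sign π : ℤ) : ℂ)) := by
    intro α β π
    have h1 : Equiv.Perm.sign (blockPerm α β * π⁻¹)
        = Equiv.Perm.sign α * Equiv.Perm.sign β * Equiv.Perm.sign π := by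
      rw [map_mul, Equiv.Perm.sign_inv]
      congr 1
      rw [blockPerm, Equiv.Perm.sign_permCongr, Equiv.Perm.sign_sumCongr]
    rw [h1]
    push_cast
    ring
  -- expand the tensor product of the two antisymmetrizers
  have hmapsum : TensorProduct.map (Aop σop k) (Aop σop l)
      = ∑ α : Equiv.Perm (Fin k), ∑ β : Equiv.Perm (Fin l),
          ((((Equiv.Perm.sign α : ℤ) : ℂ)) * (((Equiv.Perm.sign β : ℤ) : ℂ))) •
            TensorProduct.map (σop k α) (σop l β) := by
    have h0 : ∀ (A : Module.End ℂ (T k)) (B : Module.End ℂ (T l)),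
        TensorProduct.map A B
          = TensorProduct.mapBilinear (RingHom.id ℂ) (T k) (T l) (T k) (T l) A B :=
      fun A B => (TensorProduct.mapBilinear_apply A B).symm
    rw [h0]
    unfold Aop
    simp only [map_sum, map_smul, LinearMap.sum_apply, LinearMap.smul_apply,
      smul_smul, TensorProduct.mapBilinear_apply]
    simp only [Finset.smul_sum, smul_smul]
    rw [Finset.sum_comm]
    refine Finset.sum_congr rfl fun α _ => Finset.sum_congr rfl fun β _ => ?_
    congr 1
    ring
  -- pointwise computation
  apply LinearMap.ext
  intro y
  simp only [LinearMap.coe_comp, Function.comp_apply, LinearEquiv.coe_coe]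
  have hterm : ∀ (π : Equiv.Perm (Fin (k + l))), π ∈ shuffles k l →
      ∀ (α : Equiv.Perm (Fin k)) (β : Equiv.Perm (Fin l)),
      e k l (TensorProduct.map (σop k α) (σop l β) ((e k l).symm (σop (k + l) π⁻¹ y)))
        = σop (k + l) (blockPerm α β * π⁻¹) y := by
    intro π hπ α β
    rw [← hcomp α β π hπ, Module.End.mul_apply, hblock]
    simp only [LinearMap.coe_comp, Function.comp_apply, LinearEquiv.coe_coe]
  have hRHS : e k l (TensorProduct.map (Aop σop k) (Aop σop l)
        ((e k l).symm (Ash σop k l y)))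
      = ∑ π ∈ shuffles k l, ∑ α : Equiv.Perm (Fin k), ∑ β : Equiv.Perm (Fin l),
          (((Equiv.Perm.sign π : ℤ) : ℂ) *
            (((Equiv.Perm.sign α : ℤ) : ℂ) * ((Equiv.Perm.sign β : ℤ) : ℂ))) •
            σop (k + l) (blockPerm α β * π⁻¹) y := by
    rw [hmapsum, show Ash σop k l = ∑ π ∈ shuffles k l,
      (((Equiv.Perm.sign π : ℤ) : ℂ)) • σop (k + l) π⁻¹ from rfl]
    simp only [LinearMap.sum_apply, LinearMap.smul_apply, map_sum, map_smul,
      Finset.smul_sum, smul_smul]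
    refine Finset.sum_congr rfl fun π hπ => Finset.sum_congr rfl fun α _ =>
      Finset.sum_congr rfl fun β _ => ?_
    rw [hterm π hπ α β]
  have hLHS : Aop σop (k + l) y
      = ∑ γ : Equiv.Perm (Fin (k + l)),
          (((Equiv.Perm.sign γ : ℤ) : ℂ)) • σop (k + l) γ y := by
    rw [show Aop σop (k + l) = ∑ γ : Equiv.Perm (Fin (k + l)),
      (((Equiv.Perm.sign γ : ℤ) : ℂ)) • σop (k + l) γ from rfl]
    simp only [LinearMap.sum_apply, LinearMap.smul_apply]
  rw [hRHS, hLHS]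
  have hsplit2 : (∑ π ∈ shuffles k l, ∑ α : Equiv.Perm (Fin k), ∑ β : Equiv.Perm (Fin l),
        (((Equiv.Perm.sign π : ℤ) : ℂ) *
          (((Equiv.Perm.sign α : ℤ) : ℂ) * ((Equiv.Perm.sign β : ℤ) : ℂ))) •
          σop (k + l) (blockPerm α β * π⁻¹) y)
      = ∑ z ∈ ((shuffles k l) ×ˢ (Finset.univ ×ˢ Finset.univ) :
            Finset (Equiv.Perm (Fin (k + l)) × Equiv.Perm (Fin k) × Equiv.Perm (Fin l))),
          (((Equiv.Perm.sign (blockPerm z.2.1 z.2.2 * z.1⁻¹) : ℤ) : ℂ)) •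
            σop (k + l) (blockPerm z.2.1 z.2.2 * z.1⁻¹) y := by
    simp only [Finset.sum_product]
    refine Finset.sum_congr rfl fun π hπ => Finset.sum_congr rfl fun α _ =>
      Finset.sum_congr rfl fun β _ => ?_
    congr 1
    rw [hsign α β π]
    ring
  rw [hsplit2]
  symm
  apply Finset.sum_bij (i := fun (z : Equiv.Perm (Fin (k + l)) × Equiv.Perm (Fin k) ×
      Equiv.Perm (Fin l)) (_ : z ∈ (shuffles k l) ×ˢ (Finset.univ ×ˢ Finset.univ)) =>
    blockPerm z.2.1 z.2.2 * z.1⁻¹)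
  · intro z hz
    exact Finset.mem_univ _
  · intro z hz z' hz' hzz
    rw [Finset.mem_product] at hz hz'
    obtain ⟨h1, h2, h3⟩ := decomp_inj hz.1 hz'.1 hzz
    exact Prod.ext h3 (Prod.ext h1 h2)
  · intro γ _
    obtain ⟨α, β, π, hπ, hdec⟩ := exists_decomp γ
    exact ⟨(π, α, β), by simp [Finset.mem_product, hπ], hdec.symm⟩
  · intro z hz
    rfl
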